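/- Let K be an infinite field of characteristic different from 2, G an abelian group, t ∈ G an element of order 2, q = ⌈(n−1)/2⌉, and η = (g_1,…,g_q), η' = (g_1',…,g_q') ∈ G^q. Assume that either (a) there is an i with 1 ≤ i ≤ ⌊(n−1)/2⌋ such that g_i ≢ g_i' (mod ⟨t⟩), or (b) n is even and g_q ≠ g_q'. Then the MT gradings (UJ_n, t, η) and (UJ_n, t, η') are not graded-isomorphic. -/

import Mathlib

open Matrix

/-- The submodule of upper triangular `n × n` matrices over `K`. -/
def UTs (K : Type*) [Field K] (n : ℕ) : Submodule K (Matrix (Fin n) (Fin n) K) where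
  carrier := {M | ∀ i j : Fin n, (j : ℕ) < (i : ℕ) → M i j = 0}
  add_mem' := by
    intro a b ha hb i j h
    simp [ha i j h, hb i j h]
  zero_mem' := by
    intro i j h
    simp
  smul_mem' := by
    intro c a ha i j h
    simp [ha i j h]

/-- `UJ K n` : the underlying space of the Jordan algebra of upper triangular matrices. -/
abbrev UJ (K : Type*) [Field K] (n : ℕ) : Type _ := ↥(UTs K n)

theorem mem_UTs {K : Type*} [Field K] {n : ℕ} {a : Matrix (Fin n) (Fin n) K} :
    a ∈ UTs K n ↔ ∀ i j : Fin n, (j : ℕ) < (i : ℕ) → a i j = 0 := Iff.rfl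

theorem UTs_mul_mem {K : Type*} [Field K] {n : ℕ} {a b : Matrix (Fin n) (Fin n) K}
    (ha : a ∈ UTs K n) (hb : b ∈ UTs K n) : a * b ∈ UTs K n := by
  rw [mem_UTs] at ha hb ⊢
  intro i j h
  rw [Matrix.mul_apply]
  apply Finset.sum_eq_zero
  intro k _
  rcases lt_or_ge (k : ℕ) (i : ℕ) with hk | hk
  · rw [ha i k hk, zero_mul]
  · rw [hb k j (lt_of_lt_of_le h hk), mul_zero]

/-- The Jordan product `x ∘ y = xy + yx` on upper triangular matrices. -/
def jmul {K : Type*} [Field K] {n : ℕ} (x y : UJ K n) : UJ K n :=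
  ⟨x.1 * y.1 + y.1 * x.1, (UTs K n).add_mem (UTs_mul_mem x.2 y.2) (UTs_mul_mem y.2 x.2)⟩

/-- The matrix unit `e_{ij}` (with `i ≤ j`) as an element of `UJ K n`. -/
def Eu (K : Type*) [Field K] {n : ℕ} (i j : Fin n) (h : i ≤ j) : UJ K n :=
  ⟨Matrix.single i j 1, by
    rw [mem_UTs]
    intro a b hab
    by_cases h1 : i = a ∧ j = b
    · exfalso
      rcases h1 with ⟨rfl, rfl⟩
      exact absurd hab (not_lt.mpr h)
    · simp only [Matrix.single, Matrix.of_apply, if_neg h1]⟩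

/-- `Y⁺_{i:m} = e_{i:m} + e_{−i:m}` (`0`-based index `i`, `i + m < n`). -/
def Yp (K : Type*) [Field K] {n : ℕ} (i m : ℕ) (h : i + m < n) : UJ K n :=
  Eu K ⟨i, by omega⟩ ⟨i + m, h⟩ (Fin.mk_le_mk.mpr (by omega)) +
  Eu K ⟨n - 1 - i - m, by omega⟩ ⟨n - 1 - i, by omega⟩ (Fin.mk_le_mk.mpr (by omega))

/-- `Y⁻_{i:m} = e_{i:m} − e_{−i:m}` (`0`-based index `i`, `i + m < n`). -/
def Ym (K : Type*) [Field K] {n : ℕ} (i m : ℕ) (h : i + m < n) : UJ K n :=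
  Eu K ⟨i, by omega⟩ ⟨i + m, h⟩ (Fin.mk_le_mk.mpr (by omega)) -
  Eu K ⟨n - 1 - i - m, by omega⟩ ⟨n - 1 - i, by omega⟩ (Fin.mk_le_mk.mpr (by omega))

/-- A `G`-grading on the Jordan algebra `UJ K n`: a direct sum decomposition into
`K`-subspaces `comp g` with `comp g ∘ comp h ⊆ comp (g * h)`. -/
structure UJGrading (K : Type*) [Field K] (n : ℕ) (G : Type*) [Group G] where
  comp : G → Submodule K (UJ K n)
  indep : iSupIndep comp
  sup_top : (⨆ g, comp g) = ⊤
  jmul_mem : ∀ (g h : G) (x y : UJ K n), x ∈ comp g → y ∈ comp h → jmul x y ∈ comp (g * h)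

/-- A graded isomorphism between two families of components: a bijective linear map
preserving the Jordan product and mapping each component onto the corresponding one. -/
def GradedIso {K : Type*} [Field K] {n : ℕ} {G : Type*} [Group G]
    (A A' : G → Submodule K (UJ K n)) : Prop :=
  ∃ ψ : UJ K n ≃ₗ[K] UJ K n,
    (∀ x y, ψ (jmul x y) = jmul (ψ x) (ψ y)) ∧
    ∀ g, (A g).map (ψ : UJ K n →ₗ[K] UJ K n) = A' g

/-- A family of components is elementary if every matrix unit is homogeneous. -/
def IsElementaryFam {K : Type*} [Field K] {n : ℕ} {G : Type*} [Group G]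
    (A : G → Submodule K (UJ K n)) : Prop :=
  ∀ (i j : Fin n) (h : i ≤ j), ∃ g, Eu K i j h ∈ A g

/-- A family of components is of mirror type (MT) if every nonzero `Y⁺_{i:m}`, `Y⁻_{i:m}`
is homogeneous, and their degrees differ whenever both are nonzero. -/
def IsMTFam {K : Type*} [Field K] {n : ℕ} {G : Type*} [Group G]
    (A : G → Submodule K (UJ K n)) : Prop :=
  ∀ (i m : ℕ) (h : i + m < n),
    (Yp K i m h ≠ 0 → ∃ g, Yp K i m h ∈ A g) ∧
    (Ym K i m h ≠ 0 → ∃ g, Ym K i m h ∈ A g) ∧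
    (Yp K i m h ≠ 0 → Ym K i m h ≠ 0 →
      ∀ g g' : G, Yp K i m h ∈ A g → Ym K i m h ∈ A g' → g ≠ g')

/-- The degree of the matrix unit `e_{ij}` in the elementary grading defined by `η`:
`g_i g_{i+1} ⋯ g_{j-1}`. -/
def elemDeg {n : ℕ} (G : Type*) [CommGroup G] (η : Fin (n - 1) → G) (i j : Fin n) : G :=
  ∏ k ∈ (Finset.Ico (i : ℕ) (j : ℕ)).attach,
    η ⟨k.1, by have hk := Finset.mem_Ico.mp k.2; have hj := j.isLt; omega⟩

/-- The components of the elementary grading `(UJ_n, η)`. -/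
def elemComp (K : Type*) [Field K] {n : ℕ} {G : Type*} [CommGroup G]
    (η : Fin (n - 1) → G) (g : G) : Submodule K (UJ K n) :=
  Submodule.span K {x : UJ K n | ∃ (i j : Fin n) (h : i ≤ j), elemDeg G η i j = g ∧ x = Eu K i j h}

/-- The degree of `Y⁺_{i:m}` in the MT grading determined by `η ∈ G^{⌈(n-1)/2⌉}`. -/
def mtDeg {n : ℕ} (G : Type*) [CommGroup G] (η : Fin (n / 2) → G)
    (i m : ℕ) (h : i + m < n) : G :=
  ∏ k ∈ (Finset.range m).attach,
    η ⟨min (i + k.1) (n - 2 - (i + k.1)), by have hk := Finset.mem_range.mp k.2; omega⟩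

/-- The components of the MT grading `(UJ_n, t, η)`:
`deg Y⁺_{i:m}` is `mtDeg η i m` and `deg Y⁻_{i:m} = t ⬝ mtDeg η i m`. -/
def mtComp (K : Type*) [Field K] {n : ℕ} {G : Type*} [CommGroup G]
    (t : G) (η : Fin (n / 2) → G) (g : G) : Submodule K (UJ K n) :=
  Submodule.span K {x : UJ K n |
    (∃ (i m : ℕ) (h : i + m < n), mtDeg G η i m h = g ∧ x = Yp K i m h) ∨
    (∃ (i m : ℕ) (h : i + m < n), t * mtDeg G η i m h = g ∧ x = Ym K i m h)}

/-- The set `𝒯_m` of permutations that strictly decrease to the value `0` and then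
strictly increase. -/
def TT (m : ℕ) : Set (Equiv.Perm (Fin m)) :=
  {σ | ∃ t : Fin m, (σ t : ℕ) = 0 ∧
    (∀ a b : Fin m, a < b → b ≤ t → σ b < σ a) ∧
    (∀ a b : Fin m, t ≤ a → a < b → σ a < σ b)}

/-- The left-normed Jordan product of a list of elements (`0` for the empty list). -/
def jprod {K : Type*} [Field K] {n : ℕ} : List (UJ K n) → UJ K n
  | [] => 0
  | x :: xs => xs.foldl jmul x

/-- The `k`-th left-normed Jordan power `x ∘ x ∘ ⋯ ∘ x` (`k` factors, `0` for `k = 0`). -/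
def jpow {K : Type*} [Field K] {n : ℕ} (x : UJ K n) : ℕ → UJ K n
  | 0 => 0
  | 1 => x
  | (k + 2) => jmul (jpow x (k + 1)) x

/-! ### Auxiliary development for statement_16 -/

section AuxDev

open Finset Submodule

variable {K : Type*} [Field K] {n : ℕ} {G : Type*} [CommGroup G]

theorem Eu_apply (i j : Fin n) (h : i ≤ j) (a b : Fin n) :
    ((Eu K i j h : UJ K n) : Matrix (Fin n) (Fin n) K) a b
      = if i = a ∧ j = b then 1 else 0 := rfl

theorem jmul_coe (x y : UJ K n) :
    ((jmul x y : UJ K n) : Matrix (Fin n) (Fin n) K) = x.1 * y.1 + y.1 * x.1 := rfl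

theorem Yp_apply (i m : ℕ) (h : i + m < n) (a b : Fin n) :
    ((Yp K i m h : UJ K n) : Matrix (Fin n) (Fin n) K) a b
      = (if i = (a : ℕ) ∧ i + m = (b : ℕ) then (1:K) else 0)
        + (if n - 1 - i - m = (a : ℕ) ∧ n - 1 - i = (b : ℕ) then (1:K) else 0) := by
  have hr : ((Yp K i m h : UJ K n) : Matrix (Fin n) (Fin n) K) a b
      = (if (⟨i, by omega⟩ : Fin n) = a ∧ (⟨i+m, h⟩ : Fin n) = b then (1:K) else 0)
        + (if (⟨n-1-i-m, by omega⟩ : Fin n) = a ∧ (⟨n-1-i, by omega⟩ : Fin n) = b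
            then (1:K) else 0) := rfl
  rw [hr]
  simp [Fin.ext_iff]

theorem Ym_apply (i m : ℕ) (h : i + m < n) (a b : Fin n) :
    ((Ym K i m h : UJ K n) : Matrix (Fin n) (Fin n) K) a b
      = (if i = (a : ℕ) ∧ i + m = (b : ℕ) then (1:K) else 0)
        - (if n - 1 - i - m = (a : ℕ) ∧ n - 1 - i = (b : ℕ) then (1:K) else 0) := by
  have hr : ((Ym K i m h : UJ K n) : Matrix (Fin n) (Fin n) K) a b
      = (if (⟨i, by omega⟩ : Fin n) = a ∧ (⟨i+m, h⟩ : Fin n) = b then (1:K) else 0)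
        - (if (⟨n-1-i-m, by omega⟩ : Fin n) = a ∧ (⟨n-1-i, by omega⟩ : Fin n) = b
            then (1:K) else 0) := rfl
  rw [hr]
  simp [Fin.ext_iff]

theorem Eu_congr {i j i' j' : Fin n} (h : i ≤ j) (h' : i' ≤ j')
    (hi : i = i') (hj : j = j') : Eu K i j h = Eu K i' j' h' := by
  subst hi; subst hj; rfl

/-! #### The radical filtration -/

/-- The `m`-th power of the radical: matrices supported on `j - i ≥ m`. -/
def Qf (K : Type*) [Field K] (n : ℕ) (m : ℕ) : Submodule K (UJ K n) where
  carrier := {x | ∀ i j : Fin n, (j : ℕ) < (i : ℕ) + m → (x : Matrix (Fin n) (Fin n) K) i j = 0}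
  add_mem' := by intro a b ha hb i j hij; simp [ha i j hij, hb i j hij]
  zero_mem' := by intro i j hij; simp
  smul_mem' := by intro c a ha i j hij; simp [ha i j hij]

theorem mem_Qf {m : ℕ} {x : UJ K n} :
    x ∈ Qf K n m ↔ ∀ i j : Fin n, (j : ℕ) < (i : ℕ) + m → x.1 i j = 0 := Iff.rfl

theorem Qf_zero : Qf K n 0 = ⊤ := by
  rw [eq_top_iff]; intro x _ i j hij
  exact x.2 i j hij

theorem pow_mem_UTs {a : Matrix (Fin n) (Fin n) K} (ha : a ∈ UTs K n) (k : ℕ) :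
    a ^ k ∈ UTs K n := by
  induction k with
  | zero =>
    intro i j hij
    rw [pow_zero]
    exact Matrix.one_apply_ne (Fin.ne_of_val_ne (by omega))
  | succ k ih => rw [pow_succ]; exact UTs_mul_mem ih ha

theorem pow_diag {a : Matrix (Fin n) (Fin n) K} (ha : a ∈ UTs K n) (k : ℕ) (i : Fin n) :
    (a ^ k) i i = (a i i) ^ k := by
  induction k with
  | zero => simp [Matrix.one_apply]
  | succ k ih =>
    rw [pow_succ, Matrix.mul_apply, Finset.sum_eq_single i]
    · rw [ih, pow_succ]
    · intro b _ hb
      rcases lt_or_ge (b : ℕ) (i : ℕ) with hbl | hbl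
      · rw [pow_mem_UTs ha k i b hbl, zero_mul]
      · have : (i : ℕ) < (b : ℕ) := lt_of_le_of_ne hbl (by simpa [Fin.ext_iff, eq_comm] using hb)
        rw [ha b i this, mul_zero]
    · simp

theorem strict_pow {a : Matrix (Fin n) (Fin n) K}
    (hd : ∀ i j : Fin n, (j : ℕ) < (i : ℕ) + 1 → a i j = 0) (k : ℕ) :
    ∀ i j : Fin n, (j : ℕ) < (i : ℕ) + k → (a ^ k) i j = 0 := by
  induction k with
  | zero =>
    intro i j hij
    simp [Matrix.one_apply, (Fin.ne_of_val_ne (by omega) : i ≠ j)]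
  | succ k ih =>
    intro i j hij
    rw [pow_succ, Matrix.mul_apply]
    apply Finset.sum_eq_zero
    intro b _
    rcases lt_or_ge (b : ℕ) ((i : ℕ) + k) with hbl | hbl
    · rw [ih i b hbl, zero_mul]
    · rw [hd b j (by omega), mul_zero]

theorem jpow_coe (x : UJ K n) (k : ℕ) :
    ((jpow x (k+1) : UJ K n) : Matrix (Fin n) (Fin n) K) = (2:K) ^ k • (x.1 ^ (k+1)) := by
  induction k with
  | zero => simp [jpow]
  | succ k ih =>
    show ((jmul (jpow x (k+1)) x : UJ K n) : Matrix (Fin n) (Fin n) K) = _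
    rw [jmul_coe, ih]
    rw [smul_mul_assoc, mul_smul_comm, ← pow_succ, ← pow_succ']
    rw [← smul_add, ← two_smul K, smul_smul, ← pow_succ]

theorem mem_Qf_one_iff (h2 : (2:K) ≠ 0) (hn : 1 ≤ n) (x : UJ K n) :
    x ∈ Qf K n 1 ↔ jpow x n = 0 := by
  obtain ⟨k, rfl⟩ : ∃ k, n = k + 1 := ⟨n - 1, by omega⟩
  constructor
  · intro hx
    have hz : (x.1) ^ (k+1) = 0 := by
      ext i j
      have hij : (j : ℕ) < (i : ℕ) + (k+1) := by have := j.isLt; omega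
      rw [strict_pow hx (k+1) i j hij, Matrix.zero_apply]
    apply Subtype.ext
    rw [jpow_coe, hz, smul_zero]
    rfl
  · intro hx i j hij
    have hz : x.1 ^ (k+1) = 0 := by
      have hc := congrArg (Subtype.val) hx
      rw [jpow_coe] at hc
      have h2k : (2:K)^k ≠ 0 := pow_ne_zero _ h2
      have hc' : (2:K)^k • (x.1 ^ (k+1)) = 0 := hc
      rcases smul_eq_zero.mp hc' with h | h
      · exact absurd h h2k
      · exact h
    rcases Nat.lt_or_ge (j:ℕ) (i:ℕ) with hlt | hge
    · exact x.2 i j hlt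
    · have hji : j = i := Fin.ext (by omega)
      subst hji
      have hdiag : (x.1 j j) ^ (k+1) = 0 := by
        rw [← pow_diag x.2, hz, Matrix.zero_apply]
      exact pow_eq_zero_iff (by omega) |>.mp hdiag

theorem psi_jpow (ψ : UJ K n ≃ₗ[K] UJ K n)
    (hm : ∀ x y, ψ (jmul x y) = jmul (ψ x) (ψ y)) (x : UJ K n) (k : ℕ) :
    ψ (jpow x k) = jpow (ψ x) k := by
  induction k with
  | zero => simp [jpow]
  | succ k ih =>
    match k, ih with
    | 0, _ => rfl
    | (k+1), ih => rw [show jpow x (k+2) = jmul (jpow x (k+1)) x from rfl, hm, ih]; rfl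

theorem map_Qf_one (h2 : (2:K) ≠ 0) (hn : 1 ≤ n) (ψ : UJ K n ≃ₗ[K] UJ K n)
    (hm : ∀ x y, ψ (jmul x y) = jmul (ψ x) (ψ y)) :
    (Qf K n 1).map (ψ : UJ K n →ₗ[K] UJ K n) = Qf K n 1 := by
  have key : ∀ (ψ' : UJ K n ≃ₗ[K] UJ K n), (∀ x y, ψ' (jmul x y) = jmul (ψ' x) (ψ' y)) →
      (Qf K n 1).map (ψ' : UJ K n →ₗ[K] UJ K n) ≤ Qf K n 1 := by
    intro ψ' hm'
    rintro _ ⟨x, hx0, rfl⟩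
    have hx : x ∈ Qf K n 1 := hx0
    rw [mem_Qf_one_iff h2 hn] at hx
    have : ψ' x ∈ Qf K n 1 := by
      rw [mem_Qf_one_iff h2 hn, ← psi_jpow ψ' hm', hx, map_zero]
    exact this
  apply le_antisymm (key ψ hm)
  intro x hx
  have hsym : ∀ a b, ψ.symm (jmul a b) = jmul (ψ.symm a) (ψ.symm b) := by
    intro a b
    apply ψ.injective
    rw [hm, ψ.apply_symm_apply, ψ.apply_symm_apply, ψ.apply_symm_apply]
  have hmem : ψ.symm x ∈ Qf K n 1 := key ψ.symm hsym ⟨x, hx, rfl⟩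
  exact ⟨ψ.symm x, hmem, ψ.apply_symm_apply x⟩

theorem jmul_mem_Qf {m : ℕ} {x y : UJ K n} (hx : x ∈ Qf K n m) (hy : y ∈ Qf K n 1) :
    jmul x y ∈ Qf K n (m+1) := by
  intro i j hij
  rw [jmul_coe, Matrix.add_apply, Matrix.mul_apply, Matrix.mul_apply]
  rw [Finset.sum_eq_zero, Finset.sum_eq_zero, add_zero]
  · intro b _
    rcases lt_or_ge (b:ℕ) ((i:ℕ)+1) with hb | hb
    · rw [hy i b hb, zero_mul]
    · rw [hx b j (by omega), mul_zero]
  · intro b _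
    rcases lt_or_ge (b:ℕ) ((i:ℕ)+m) with hb | hb
    · rw [hx i b hb, zero_mul]
    · rw [hy b j (by omega), mul_zero]

theorem decomp (x : UJ K n) (p : Submodule K (UJ K n))
    (hp : ∀ (i j : Fin n) (h : i ≤ j), x.1 i j ≠ 0 → Eu K i j h ∈ p) : x ∈ p := by
  have hx : x = ∑ ij : Fin n × Fin n,
      if h : ij.1 ≤ ij.2 then x.1 ij.1 ij.2 • Eu K ij.1 ij.2 h else 0 := by
    apply Subtype.ext
    have hcoe : ((∑ ij : Fin n × Fin n,
        if h : ij.1 ≤ ij.2 then x.1 ij.1 ij.2 • Eu K ij.1 ij.2 h else 0 : UJ K n) :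
          Matrix (Fin n) (Fin n) K)
        = ∑ ij : Fin n × Fin n,
            ((if h : ij.1 ≤ ij.2 then x.1 ij.1 ij.2 • Eu K ij.1 ij.2 h else 0 : UJ K n) :
              Matrix (Fin n) (Fin n) K) := by
      exact map_sum ((UTs K n).subtype) _ _
    rw [hcoe]
    ext a b
    rw [Matrix.sum_apply]
    rw [Finset.sum_eq_single (a, b)]
    · by_cases hab : a ≤ b
      · rw [dif_pos hab]
        have : ((x.1 a b • Eu K a b hab : UJ K n) : Matrix (Fin n) (Fin n) K) a b
            = x.1 a b * (if a = a ∧ b = b then (1:K) else 0) := rfl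
        rw [this]
        simp
      · rw [dif_neg hab]
        have hba : (b:ℕ) < (a:ℕ) := by
          rcases Nat.lt_or_ge (b:ℕ) (a:ℕ) with hc | hc
          · exact hc
          · exact absurd (Fin.le_def.mpr hc) hab
        have hz : x.1 a b = 0 := x.2 a b hba
        simp [hz]
    · intro ij _ hij
      by_cases hle : ij.1 ≤ ij.2
      · rw [dif_pos hle]
        have : ((x.1 ij.1 ij.2 • Eu K ij.1 ij.2 hle : UJ K n) : Matrix (Fin n) (Fin n) K) a b
            = x.1 ij.1 ij.2 * (if ij.1 = a ∧ ij.2 = b then (1:K) else 0) := rfl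
        rw [this, if_neg, mul_zero]
        intro hc
        exact hij (Prod.ext hc.1 hc.2)
      · rw [dif_neg hle]; rfl
    · intro hc
      exact absurd (Finset.mem_univ _) hc
  rw [hx]
  apply Submodule.sum_mem
  intro ij _
  by_cases hle : ij.1 ≤ ij.2
  · rw [dif_pos hle]
    by_cases hz : x.1 ij.1 ij.2 = 0
    · rw [hz, zero_smul]; exact p.zero_mem
    · exact p.smul_mem _ (hp ij.1 ij.2 hle hz)
  · rw [dif_neg hle]; exact p.zero_mem

theorem Eu_mem_Qf {m : ℕ} (i j : Fin n) (h : i ≤ j) (hm : (i : ℕ) + m ≤ (j : ℕ)) :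
    Eu K i j h ∈ Qf K n m := by
  intro a b hab
  rw [Eu_apply]
  split_ifs with hc
  · exfalso; rcases hc with ⟨rfl, rfl⟩; omega
  · rfl

theorem Qf_succ_span (m : ℕ) :
    Qf K n (m+1) = Submodule.span K
      {z : UJ K n | ∃ x ∈ Qf K n m, ∃ y ∈ Qf K n 1, z = jmul x y} := by
  apply le_antisymm
  · intro x hx
    apply decomp x
    intro i j hle hne
    have hj : (i:ℕ) + m + 1 ≤ (j:ℕ) := by
      by_contra hc
      exact hne (hx i j (by omega))
    have hjn : (j:ℕ) - 1 < n := by omega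
    have hil : i ≤ (⟨(j:ℕ) - 1, hjn⟩ : Fin n) :=
      Fin.le_def.mpr (show (i:ℕ) ≤ (j:ℕ) - 1 by omega)
    have hlj : (⟨(j:ℕ) - 1, hjn⟩ : Fin n) ≤ j :=
      Fin.le_def.mpr (show (j:ℕ) - 1 ≤ (j:ℕ) by omega)
    have hjm : jmul (Eu K i ⟨(j:ℕ) - 1, hjn⟩ hil) (Eu K ⟨(j:ℕ) - 1, hjn⟩ j hlj)
        = Eu K i j hle := by
      apply Subtype.ext
      rw [jmul_coe]
      show Matrix.single i _ 1 * Matrix.single _ j 1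
          + Matrix.single _ j 1 * Matrix.single i _ 1
          = Matrix.single i j 1
      have hz : Matrix.single (⟨(j:ℕ)-1, hjn⟩ : Fin n) j (1:K)
          * Matrix.single i (⟨(j:ℕ)-1, hjn⟩ : Fin n) (1:K) = 0 :=
        Matrix.single_mul_single_of_ne (1:K) (⟨(j:ℕ)-1, hjn⟩ : Fin n) j i
          (Fin.ne_of_val_ne (show (j:ℕ) ≠ (i:ℕ) by omega)) (1:K)
      rw [Matrix.single_mul_single_same, hz, one_mul, add_zero]
    apply Submodule.subset_span
    refine ⟨Eu K i ⟨(j:ℕ) - 1, hjn⟩ hil,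
      Eu_mem_Qf _ _ _ (show (i:ℕ) + m ≤ (j:ℕ) - 1 by omega),
      Eu K ⟨(j:ℕ) - 1, hjn⟩ j hlj,
      Eu_mem_Qf _ _ _ (show (j:ℕ) - 1 + 1 ≤ (j:ℕ) by omega), hjm.symm⟩
  · rw [Submodule.span_le]
    rintro z ⟨x, hx, y, hy, rfl⟩
    exact jmul_mem_Qf hx hy

theorem map_Qf (h2 : (2:K) ≠ 0) (hn : 1 ≤ n) (ψ : UJ K n ≃ₗ[K] UJ K n)
    (hm : ∀ x y, ψ (jmul x y) = jmul (ψ x) (ψ y)) :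
    ∀ m, 1 ≤ m → (Qf K n m).map (ψ : UJ K n →ₗ[K] UJ K n) = Qf K n m := by
  intro m hm1
  induction m with
  | zero => omega
  | succ m ih =>
    rcases Nat.eq_zero_or_pos m with rfl | hpos
    · exact map_Qf_one h2 hn ψ hm
    · have ihm := ih hpos
      rw [Qf_succ_span m, Submodule.map_span]
      congr 1
      ext z
      constructor
      · rintro ⟨w, ⟨x, hx, y, hy, rfl⟩, rfl⟩
        refine ⟨ψ x, ?_, ψ y, ?_, hm x y⟩
        · rw [← ihm]; exact Submodule.mem_map_of_mem hx
        · rw [← map_Qf_one h2 hn ψ hm]; exact Submodule.mem_map_of_mem hy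
      · rintro ⟨x, hx, y, hy, rfl⟩
        have hx' : x ∈ (Qf K n m).map (ψ : UJ K n →ₗ[K] UJ K n) := by rw [ihm]; exact hx
        obtain ⟨x₀, hx₀, rfl⟩ := hx'
        have hy' : y ∈ (Qf K n 1).map (ψ : UJ K n →ₗ[K] UJ K n) := by
          rw [map_Qf_one h2 hn ψ hm]; exact hy
        obtain ⟨y₀, hy₀, rfl⟩ := hy'
        exact ⟨jmul x₀ y₀, ⟨x₀, hx₀, y₀, hy₀, rfl⟩, hm x₀ y₀⟩

/-! #### The adapted basis -/

/-- Index type for the adapted basis of `UJ K n`: `(ε, i, m)` with `2i+m ≤ n-1` for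
`ε = true` (`Y⁺`) and `2i+m ≤ n-2` for `ε = false` (`Y⁻`). -/
def MTIdx (n : ℕ) : Type :=
  {x : Bool × Fin n × Fin n // 2 * (x.2.1 : ℕ) + (x.2.2 : ℕ) + (cond x.1 1 2) ≤ n}

instance : Fintype (MTIdx n) := by unfold MTIdx; infer_instance
instance : DecidableEq (MTIdx n) := by unfold MTIdx; infer_instance

def MTIdx.idx (x : MTIdx n) : ℕ := x.1.2.1
def MTIdx.lvl (x : MTIdx n) : ℕ := x.1.2.2

theorem MTIdx.bound (x : MTIdx n) : 2 * x.idx + x.lvl + 1 ≤ n := by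
  rcases x with ⟨⟨ε, i, m⟩, hx⟩
  cases ε <;> simp [MTIdx.idx, MTIdx.lvl] at hx ⊢ <;> omega

def vfam (K : Type*) [Field K] {n : ℕ} (x : MTIdx n) : UJ K n :=
  if x.1.1 = true then Yp K x.idx x.lvl (by have := x.bound; omega)
  else Ym K x.idx x.lvl (by have := x.bound; omega)

theorem MTIdx.bound' (x : MTIdx n) (hx : x.1.1 = false) : 2 * x.idx + x.lvl + 2 ≤ n := by
  rcases x with ⟨⟨ε, i, m⟩, hx2⟩
  simp [MTIdx.idx, MTIdx.lvl] at hx ⊢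
  subst hx; simpa using hx2

/-- The coordinate functionals adapted to the family `vfam`. -/
noncomputable def Phi : UJ K n →ₗ[K] (MTIdx n → K) where
  toFun a x :=
    (if 2 * x.idx + x.lvl + 1 = n then (4⁻¹ : K) else 2⁻¹) *
      (a.1 ⟨x.idx, by have := x.bound; omega⟩ ⟨x.idx + x.lvl, by have := x.bound; omega⟩ +
       (cond x.1.1 1 (-1)) *
        a.1 ⟨n - 1 - x.idx - x.lvl, by have := x.bound; omega⟩
            ⟨n - 1 - x.idx, by have := x.bound; omega⟩)
  map_add' a b := by
    funext x
    have hc : ((a + b : UJ K n) : Matrix (Fin n) (Fin n) K) = a.1 + b.1 := rfl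
    simp only [hc, Matrix.add_apply, Pi.add_apply]
    ring
  map_smul' c a := by
    funext x
    have hc : ((c • a : UJ K n) : Matrix (Fin n) (Fin n) K) = c • a.1 := rfl
    simp only [hc, Matrix.smul_apply, RingHom.id_apply, smul_eq_mul, Pi.smul_apply]
    ring

theorem vfam_true {y : MTIdx n} (h : y.1.1 = true) :
    vfam K y = Yp K y.idx y.lvl (by have := y.bound; omega) := by
  rw [vfam, if_pos h]

theorem vfam_false {y : MTIdx n} (h : y.1.1 = false) :
    vfam K y = Ym K y.idx y.lvl (by have := y.bound; omega) := by
  rw [vfam, if_neg (by simp [h])]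

theorem Phi_v (h2 : (2:K) ≠ 0) (y : MTIdx n) :
    Phi (vfam K y) = Pi.single y (1:K) := by
  have h4 : (4:K) ≠ 0 := by
    have h : (4:K) = 2 * 2 := by norm_num
    rw [h]; exact mul_ne_zero h2 h2
  funext x
  have hbx := x.bound
  have hby := y.bound
  rw [Pi.single_apply]
  have hPhi : Phi (vfam K y) x = (if 2 * x.idx + x.lvl + 1 = n then (4⁻¹ : K) else 2⁻¹) *
      ((vfam K y).1 ⟨x.idx, by omega⟩ ⟨x.idx + x.lvl, by omega⟩ +
       (cond x.1.1 1 (-1)) *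
        (vfam K y).1 ⟨n - 1 - x.idx - x.lvl, by omega⟩ ⟨n - 1 - x.idx, by omega⟩) := rfl
  rw [hPhi]
  by_cases hsame : y.idx = x.idx ∧ y.lvl = x.lvl
  swap
  · -- different (i,m): everything vanishes
    have hxy : ¬ (x = y) := by
      intro hc; subst hc; exact hsame ⟨rfl, rfl⟩
    rw [if_neg hxy]
    have e1 : (vfam K y).1 ⟨x.idx, by omega⟩ ⟨x.idx + x.lvl, by omega⟩ = 0 := by
      by_cases hεy : y.1.1 = true
      · rw [vfam_true hεy, Yp_apply]
        simp only [Fin.val_mk]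
        rw [if_neg, if_neg, add_zero]
        · rintro ⟨hc1, hc2⟩; exact hsame ⟨by omega, by omega⟩
        · rintro ⟨hc1, hc2⟩; exact hsame ⟨by omega, by omega⟩
      · have hby2 := y.bound' (by simpa using hεy)
        rw [vfam_false (by simpa using hεy), Ym_apply]
        simp only [Fin.val_mk]
        rw [if_neg, if_neg, sub_zero]
        · rintro ⟨hc1, hc2⟩; exact hsame ⟨by omega, by omega⟩
        · rintro ⟨hc1, hc2⟩; exact hsame ⟨by omega, by omega⟩
    have e2 : (vfam K y).1 ⟨n - 1 - x.idx - x.lvl, by omega⟩ ⟨n - 1 - x.idx, by omega⟩ = 0 := by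
      by_cases hεy : y.1.1 = true
      · rw [vfam_true hεy, Yp_apply]
        simp only [Fin.val_mk]
        rw [if_neg, if_neg, add_zero]
        · rintro ⟨hc1, hc2⟩; exact hsame ⟨by omega, by omega⟩
        · rintro ⟨hc1, hc2⟩; exact hsame ⟨by omega, by omega⟩
      · have hby2 := y.bound' (by simpa using hεy)
        rw [vfam_false (by simpa using hεy), Ym_apply]
        simp only [Fin.val_mk]
        rw [if_neg, if_neg, sub_zero]
        · rintro ⟨hc1, hc2⟩; exact hsame ⟨by omega, by omega⟩
        · rintro ⟨hc1, hc2⟩; exact hsame ⟨by omega, by omega⟩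
    rw [e1, e2]
    ring
  · obtain ⟨hi, hl⟩ := hsame
    by_cases hεy : y.1.1 = true <;> by_cases hεx : x.1.1 = true
    · -- both Y⁺ : x = y
      have hxy : x = y := by
        apply Subtype.ext
        apply Prod.ext
        · rw [hεx, hεy]
        · apply Prod.ext
          · exact Fin.ext hi.symm
          · exact Fin.ext hl.symm
      rw [if_pos hxy]
      rw [vfam_true hεy, Yp_apply, Yp_apply]
      simp only [Fin.val_mk, hεx, cond_true]
      by_cases hself : 2 * x.idx + x.lvl + 1 = n
      · rw [if_pos hself, if_pos (by omega : y.idx = x.idx ∧ y.idx + y.lvl = x.idx + x.lvl),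
          if_pos (show _ ∧ _ by omega), if_pos (show _ ∧ _ by omega),
          if_pos (show _ ∧ _ by omega)]
        have h : ((1:K) + 1 + 1 * (1 + 1)) = 4 := by ring
        rw [h, inv_mul_cancel₀ h4]
      · rw [if_neg hself, if_pos (by omega : y.idx = x.idx ∧ y.idx + y.lvl = x.idx + x.lvl),
          if_neg (by rintro ⟨hc1, hc2⟩; omega),
          if_neg (by rintro ⟨hc1, hc2⟩; omega),
          if_pos (show _ ∧ _ by omega)]
        have h : ((1:K) + 0 + 1 * (0 + 1)) = 2 := by ring
        rw [h, inv_mul_cancel₀ h2]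
    · -- y is Y⁺, x is Y⁻
      have hbx2 := x.bound' (by simpa using hεx)
      have hxy : ¬ (x = y) := by
        intro hc; rw [hc] at hεx; exact hεx hεy
      rw [if_neg hxy]
      rw [vfam_true hεy, Yp_apply, Yp_apply]
      simp only [Fin.val_mk, Bool.not_eq_true] at *
      rw [hεx]
      simp only [cond_false]
      rw [if_neg (by omega), if_pos (by omega : y.idx = x.idx ∧ y.idx + y.lvl = x.idx + x.lvl),
        if_neg (by rintro ⟨hc1, hc2⟩; omega),
        if_neg (by rintro ⟨hc1, hc2⟩; omega),
        if_pos (show _ ∧ _ by omega)]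
      ring
    · -- y is Y⁻, x is Y⁺
      have hby2 := y.bound' (by simpa using hεy)
      have hxy : ¬ (x = y) := by
        intro hc; rw [hc] at hεx; exact hεy hεx
      rw [if_neg hxy]
      rw [vfam_false (by simpa using hεy), Ym_apply, Ym_apply]
      simp only [Fin.val_mk, hεx, cond_true]
      rw [if_neg (by omega), if_pos (by omega : y.idx = x.idx ∧ y.idx + y.lvl = x.idx + x.lvl),
        if_neg (by rintro ⟨hc1, hc2⟩; omega),
        if_neg (by rintro ⟨hc1, hc2⟩; omega),
        if_pos (show _ ∧ _ by omega)]
      ring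
    · -- both Y⁻ : x = y
      have hby2 := y.bound' (by simpa using hεy)
      have hbx2 := x.bound' (by simpa using hεx)
      have hxy : x = y := by
        apply Subtype.ext
        apply Prod.ext
        · simp only [Bool.not_eq_true] at hεx hεy; rw [hεx, hεy]
        · apply Prod.ext
          · exact Fin.ext hi.symm
          · exact Fin.ext hl.symm
      rw [if_pos hxy]
      rw [vfam_false (by simpa using hεy), Ym_apply, Ym_apply]
      simp only [Fin.val_mk, Bool.not_eq_true] at *
      rw [hεx]
      simp only [cond_false]
      rw [if_neg (by omega), if_pos (by omega : y.idx = x.idx ∧ y.idx + y.lvl = x.idx + x.lvl),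
        if_neg (by rintro ⟨hc1, hc2⟩; omega),
        if_neg (by rintro ⟨hc1, hc2⟩; omega),
        if_pos (show _ ∧ _ by omega)]
      have h : ((1:K) - 0 + -1 * (0 - 1)) = 2 := by ring
      rw [h, inv_mul_cancel₀ h2]

theorem vfam_indep (h2 : (2:K) ≠ 0) : LinearIndependent K (vfam K (n := n)) := by
  have h := (Pi.basisFun K (MTIdx n)).linearIndependent
  apply LinearIndependent.of_comp (Phi (K := K) (n := n))
  have : (Phi (K := K) (n := n)) ∘ (vfam K) = fun y => Pi.single y (1:K) := by
    funext y; exact Phi_v h2 y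
  rw [this]
  convert h using 1
  funext y
  simp [Pi.basisFun_apply]

theorem span_inf (h2 : (2:K) ≠ 0) (s u : Set (MTIdx n)) :
    Submodule.span K (vfam K '' s) ⊓ Submodule.span K (vfam K '' u)
      = Submodule.span K (vfam K '' (s ∩ u)) := by
  apply le_antisymm
  · have hs : vfam K '' s = vfam K '' ((s ∩ u) ∪ (s \ u)) := by
      rw [Set.inter_union_diff]
    rw [hs, Set.image_union, Submodule.span_union]
    rw [sup_inf_assoc_of_le _ (Submodule.span_mono
      (Set.image_mono Set.inter_subset_right))]
    have hd : Disjoint (Submodule.span K (vfam K '' (s \ u)))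
        (Submodule.span K (vfam K '' u)) :=
      (vfam_indep h2).disjoint_span_image Set.disjoint_sdiff_left
    rw [disjoint_iff.mp hd, sup_bot_eq]
  · apply le_inf <;> apply Submodule.span_mono <;> apply Set.image_mono
    · exact Set.inter_subset_left
    · exact Set.inter_subset_right

theorem finrank_span_finset (h2 : (2:K) ≠ 0) (s : Finset (MTIdx n)) :
    Module.finrank K (Submodule.span K (vfam K '' (s : Set (MTIdx n)))) = s.card := by
  classical
  have hind : LinearIndependent K (fun x : (s : Set (MTIdx n)) => vfam K x.1) :=
    (vfam_indep h2).comp _ Subtype.val_injective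
  rw [Set.image_eq_range, finrank_span_eq_card hind]
  simp

/-! #### Degrees -/

/-- Degree of the `j`-th superdiagonal in the MT grading: `η (min j (n-2-j))`. -/
def etaB (n : ℕ) (η : Fin (n/2) → G) (j : ℕ) : G :=
  if h : min j (n-2-j) < n/2 then η ⟨min j (n-2-j), h⟩ else 1

/-- `dd i m` : degree of `Y_{i:m}`. -/
def dd (n : ℕ) (η : Fin (n/2) → G) (i m : ℕ) : G :=
  ∏ k ∈ Finset.range m, etaB n η (i + k)

/-- prefix products -/
def pp (n : ℕ) (η : Fin (n/2) → G) (k : ℕ) : G := dd n η 0 k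

def degOf (n : ℕ) (t : G) (η : Fin (n/2) → G) (x : MTIdx n) : G :=
  cond x.1.1 (dd n η x.idx x.lvl) (t * dd n η x.idx x.lvl)

theorem etaB_symm (n : ℕ) (η : Fin (n/2) → G) (j : ℕ) :
    etaB n η (n - 2 - j) = etaB n η j := by
  have hm : min (n - 2 - j) (n - 2 - (n - 2 - j)) = min j (n - 2 - j) := by omega
  unfold etaB
  simp only [hm]

theorem mtDeg_eq_dd (η : Fin (n/2) → G) (i m : ℕ) (h : i + m < n) :
    mtDeg G η i m h = dd n η i m := by
  rw [mtDeg, dd, ← Finset.prod_attach (Finset.range m) (fun k => etaB n η (i + k))]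
  apply Finset.prod_congr rfl
  intro k _
  have hk := Finset.mem_range.mp k.2
  rw [etaB, dif_pos (show min (i + k.1) (n - 2 - (i + k.1)) < n/2 by omega)]

theorem dd_mirror (η : Fin (n/2) → G) (i m : ℕ) (h : i + m + 1 ≤ n) :
    dd n η (n - 1 - i - m) m = dd n η i m := by
  rw [dd, dd]
  rw [← Finset.prod_range_reflect (fun k => etaB n η (i + k)) m]
  apply Finset.prod_congr rfl
  intro k hk
  have hk' := Finset.mem_range.mp hk
  conv_rhs => rw [← etaB_symm n η (i + (m - 1 - k))]
  congr 1
  omega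

theorem pp_mul_dd (η : Fin (n/2) → G) (i m : ℕ) :
    pp n η (i + m) = pp n η i * dd n η i m := by
  rw [pp, pp, dd, dd, dd]
  simp only [zero_add]
  exact Finset.prod_range_add _ i m

theorem pp_reflect (η : Fin (n/2) → G) (r : ℕ) (hr : r ≤ n - 1) (hn : 1 ≤ n) :
    pp n η (n - 1 - r) * pp n η r = pp n η (n - 1) := by
  have h1 : pp n η (n-1) = pp n η (n-1-r) * dd n η (n-1-r) r := by
    rw [← pp_mul_dd]; congr 1; omega
  rw [h1]
  congr 1
  rw [pp, dd, dd]
  simp only [zero_add]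
  rw [← Finset.prod_range_reflect (fun k => etaB n η k) r]
  apply Finset.prod_congr rfl
  intro k hk
  have hk' := Finset.mem_range.mp hk
  conv_rhs => rw [← etaB_symm n η (n - 1 - r + k)]
  congr 1
  omega

/-! #### Span descriptions -/

theorem eu_mem_span (h2 : (2:K) ≠ 0) (i j : Fin n) (h : i ≤ j) :
    Eu K i j h ∈ Submodule.span K
      (vfam K '' {x : MTIdx n | x.lvl = (j : ℕ) - (i : ℕ)}) := by
  have hij : (i:ℕ) + ((j:ℕ) - (i:ℕ)) = (j:ℕ) := by have := Fin.le_def.mp h; omega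
  have hjn := j.isLt
  have hin := i.isLt
  set m : ℕ := (j:ℕ) - (i:ℕ) with hmdef
  rcases Nat.lt_or_ge (2 * (i:ℕ) + m + 2) (n+1) with hca | hca
  · -- strict representative
    set xp : MTIdx n := ⟨(true, i, ⟨m, by omega⟩), by
      simp only [cond_true, Fin.val_mk]; omega⟩ with hxp
    set xm : MTIdx n := ⟨(false, i, ⟨m, by omega⟩), by
      simp only [cond_false, Fin.val_mk]; omega⟩ with hxm
    have key : vfam K xp + vfam K xm = (2:K) • Eu K i j h := by
      rw [vfam_true rfl, vfam_false rfl]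
      apply Subtype.ext
      ext a b
      simp only [Submodule.coe_add, SetLike.val_smul, Matrix.add_apply, Matrix.smul_apply,
        Yp_apply, Ym_apply, Eu_apply, smul_eq_mul]
      have hc1 : ((xp.idx : ℕ) = ↑a ∧ xp.idx + xp.lvl = ↑b) ↔ (i = a ∧ j = b) := by
        rw [Fin.ext_iff, Fin.ext_iff]
        show ((i:ℕ) = ↑a ∧ (i:ℕ) + m = ↑b) ↔ _
        omega
      rw [if_congr hc1 rfl rfl]
      have hc1' : ((xm.idx : ℕ) = ↑a ∧ xm.idx + xm.lvl = ↑b) ↔ (i = a ∧ j = b) := hc1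
      rw [if_congr hc1' rfl rfl]
      rw [if_congr (show ((n - 1 - xp.idx - xp.lvl : ℕ) = ↑a ∧ (n - 1 - xp.idx : ℕ) = ↑b)
        ↔ ((n - 1 - xm.idx - xm.lvl : ℕ) = ↑a ∧ (n - 1 - xm.idx : ℕ) = ↑b) from Iff.rfl) rfl rfl]
      ring
    have hEu : Eu K i j h = (2⁻¹:K) • (vfam K xp + vfam K xm) := by
      rw [key, smul_smul, inv_mul_cancel₀ h2, one_smul]
    rw [hEu]
    apply Submodule.smul_mem
    apply Submodule.add_mem <;> apply Submodule.subset_span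
    · exact ⟨xp, rfl, rfl⟩
    · exact ⟨xm, rfl, rfl⟩
  · rcases Nat.eq_or_lt_of_le hca with heq | hgt
    · -- self-mirror : 2i+m+1 = n
      set xp : MTIdx n := ⟨(true, i, ⟨m, by omega⟩), by
        simp only [cond_true, Fin.val_mk]; omega⟩ with hxp
      have key : vfam K xp = (2:K) • Eu K i j h := by
        rw [vfam_true rfl]
        apply Subtype.ext
        ext a b
        simp only [SetLike.val_smul, Matrix.smul_apply, Yp_apply, Eu_apply, smul_eq_mul]
        have hc1 : ((xp.idx : ℕ) = ↑a ∧ xp.idx + xp.lvl = ↑b) ↔ (i = a ∧ j = b) := by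
          rw [Fin.ext_iff, Fin.ext_iff]
          show ((i:ℕ) = ↑a ∧ (i:ℕ) + m = ↑b) ↔ _
          omega
        rw [if_congr hc1 rfl rfl]
        have hc2 : ((n - 1 - xp.idx - xp.lvl : ℕ) = ↑a ∧ (n - 1 - xp.idx : ℕ) = ↑b)
            ↔ (i = a ∧ j = b) := by
          rw [Fin.ext_iff, Fin.ext_iff]
          show ((n - 1 - (i:ℕ) - m : ℕ) = ↑a ∧ (n - 1 - (i:ℕ) : ℕ) = ↑b) ↔ _
          omega
        rw [if_congr hc2 rfl rfl]
        ring
      have hEu : Eu K i j h = (2⁻¹:K) • (vfam K xp) := by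
        rw [key, smul_smul, inv_mul_cancel₀ h2, one_smul]
      rw [hEu]
      exact Submodule.smul_mem _ _ (Submodule.subset_span ⟨xp, rfl, rfl⟩)
    · -- corepresentative : 2i+m ≥ n
      set i' : ℕ := n - 1 - (i:ℕ) - m with hi'
      set xp : MTIdx n := ⟨(true, ⟨i', by omega⟩, ⟨m, by omega⟩), by
        simp only [cond_true, Fin.val_mk]; omega⟩ with hxp
      set xm : MTIdx n := ⟨(false, ⟨i', by omega⟩, ⟨m, by omega⟩), by
        simp only [cond_false, Fin.val_mk]; omega⟩ with hxm
      have key : vfam K xp - vfam K xm = (2:K) • Eu K i j h := by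
        rw [vfam_true rfl, vfam_false rfl]
        apply Subtype.ext
        ext a b
        simp only [AddSubgroupClass.coe_sub, SetLike.val_smul, Matrix.sub_apply,
          Matrix.smul_apply, Yp_apply, Ym_apply, Eu_apply, smul_eq_mul]
        have hc2 : ((n - 1 - xp.idx - xp.lvl : ℕ) = ↑a ∧ (n - 1 - xp.idx : ℕ) = ↑b)
            ↔ (i = a ∧ j = b) := by
          rw [Fin.ext_iff, Fin.ext_iff]
          show ((n - 1 - i' - m : ℕ) = ↑a ∧ (n - 1 - i' : ℕ) = ↑b) ↔ _
          omega
        rw [if_congr hc2 rfl rfl]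
        have hc2' : ((n - 1 - xm.idx - xm.lvl : ℕ) = ↑a ∧ (n - 1 - xm.idx : ℕ) = ↑b)
            ↔ (i = a ∧ j = b) := hc2
        rw [if_congr hc2' rfl rfl]
        rw [if_congr (show ((xp.idx : ℕ) = ↑a ∧ xp.idx + xp.lvl = ↑b)
          ↔ ((xm.idx : ℕ) = ↑a ∧ xm.idx + xm.lvl = ↑b) from Iff.rfl) rfl rfl]
        ring
      have hEu : Eu K i j h = (2⁻¹:K) • (vfam K xp - vfam K xm) := by
        rw [key, smul_smul, inv_mul_cancel₀ h2, one_smul]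
      rw [hEu]
      apply Submodule.smul_mem
      apply Submodule.sub_mem <;> apply Submodule.subset_span
      · exact ⟨xp, rfl, rfl⟩
      · exact ⟨xm, rfl, rfl⟩

theorem Qf_eq_span (h2 : (2:K) ≠ 0) (m : ℕ) :
    Qf K n m = Submodule.span K (vfam K '' {x : MTIdx n | m ≤ x.lvl}) := by
  apply le_antisymm
  · intro x hx
    apply decomp x
    intro i j hle hne
    have hlvl : m ≤ (j:ℕ) - (i:ℕ) := by
      by_contra hc
      exact hne (hx i j (by have := Fin.le_def.mp hle; omega))
    refine Submodule.span_mono (Set.image_mono ?_) (eu_mem_span h2 i j hle)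
    intro z hz
    simp only [Set.mem_setOf_eq] at hz ⊢
    omega
  · rw [Submodule.span_le]
    rintro _ ⟨y, hy, rfl⟩
    simp only [Set.mem_setOf_eq] at hy
    have hby := y.bound
    intro a b hab
    by_cases hεy : y.1.1 = true
    · rw [vfam_true hεy, Yp_apply]
      rw [if_neg (by rintro ⟨hc1, hc2⟩; omega),
        if_neg (by rintro ⟨hc1, hc2⟩; omega), add_zero]
    · rw [vfam_false (by simpa using hεy), Ym_apply]
      rw [if_neg (by rintro ⟨hc1, hc2⟩; omega),
        if_neg (by rintro ⟨hc1, hc2⟩; omega), sub_zero]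

theorem Yp_mirror (i m : ℕ) (h : i + m < n) (h' : n - 1 - i - m + m < n) :
    Yp K i m h = Yp K (n - 1 - i - m) m h' := by
  apply Subtype.ext
  ext a b
  rw [Yp_apply, Yp_apply]
  rw [if_congr (show ((i:ℕ) = ↑a ∧ i + m = ↑b)
    ↔ (n - 1 - (n - 1 - i - m) - m = ↑a ∧ n - 1 - (n - 1 - i - m) = ↑b) by omega) rfl rfl]
  rw [if_congr (show ((n - 1 - i - m : ℕ) = ↑a ∧ n - 1 - i = ↑b)
    ↔ ((n - 1 - i - m : ℕ) = ↑a ∧ n - 1 - i - m + m = ↑b) by omega) rfl rfl]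
  exact add_comm _ _

theorem Ym_mirror (i m : ℕ) (h : i + m < n) (h' : n - 1 - i - m + m < n) :
    Ym K i m h = - Ym K (n - 1 - i - m) m h' := by
  apply Subtype.ext
  have hco : ((- Ym K (n - 1 - i - m) m h' : UJ K n) : Matrix (Fin n) (Fin n) K)
      = - ((Ym K (n - 1 - i - m) m h' : UJ K n) : Matrix (Fin n) (Fin n) K) := rfl
  rw [hco]
  ext a b
  rw [Matrix.neg_apply, Ym_apply, Ym_apply]
  rw [if_congr (show ((i:ℕ) = ↑a ∧ i + m = ↑b)
    ↔ (n - 1 - (n - 1 - i - m) - m = ↑a ∧ n - 1 - (n - 1 - i - m) = ↑b) by omega) rfl rfl]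
  rw [if_congr (show ((n - 1 - i - m : ℕ) = ↑a ∧ n - 1 - i = ↑b)
    ↔ ((n - 1 - i - m : ℕ) = ↑a ∧ n - 1 - i - m + m = ↑b) by omega) rfl rfl]
  ring

theorem Ym_self (i m : ℕ) (h : i + m < n) (hs : 2*i + m + 1 = n) :
    Ym K i m h = 0 := by
  apply Subtype.ext
  ext a b
  rw [Ym_apply]
  rw [if_congr (show ((i:ℕ) = ↑a ∧ i + m = ↑b)
    ↔ ((n - 1 - i - m : ℕ) = ↑a ∧ n - 1 - i = ↑b) by omega) rfl rfl]
  rw [sub_self]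
  rfl

theorem mtComp_eq_span (h2 : (2:K) ≠ 0) (t : G) (η : Fin (n/2) → G) (g : G) :
    mtComp K t η g = Submodule.span K (vfam K '' {x : MTIdx n | degOf n t η x = g}) := by
  rw [mtComp]
  apply le_antisymm <;> rw [Submodule.span_le]
  · rintro z (⟨i, m, hpf, hdeg, rfl⟩ | ⟨i, m, hpf, hdeg, rfl⟩)
    · rw [mtDeg_eq_dd] at hdeg
      rcases Nat.lt_or_ge (2*i + m + 1) (n+1) with hca | hca
      · apply Submodule.subset_span
        refine ⟨⟨(true, ⟨i, by omega⟩, ⟨m, by omega⟩), by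
          simp only [cond_true, Fin.val_mk]; omega⟩, ?_, ?_⟩
        · show degOf n t η _ = g
          exact hdeg
        · exact vfam_true rfl
      · have hmir : Yp K i m hpf = Yp K (n - 1 - i - m) m (by omega) :=
          Yp_mirror i m hpf (by omega)
        rw [hmir]
        apply Submodule.subset_span
        refine ⟨⟨(true, ⟨n - 1 - i - m, by omega⟩, ⟨m, by omega⟩), by
          simp only [cond_true, Fin.val_mk]; omega⟩, ?_, ?_⟩
        · show degOf n t η _ = g
          show dd n η (n - 1 - i - m) m = g
          rw [dd_mirror η i m (by omega)]
          exact hdeg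
        · exact vfam_true rfl
    · rw [mtDeg_eq_dd] at hdeg
      rcases Nat.lt_or_ge (2*i + m + 2) (n+1) with hca | hca
      · apply Submodule.subset_span
        refine ⟨⟨(false, ⟨i, by omega⟩, ⟨m, by omega⟩), by
          simp only [cond_false, Fin.val_mk]; omega⟩, ?_, ?_⟩
        · show degOf n t η _ = g
          exact hdeg
        · exact vfam_false rfl
      · rcases Nat.eq_or_lt_of_le hca with heq | hgt
        · rw [Ym_self i m hpf (by omega)]
          exact Submodule.zero_mem _
        · have hmir : Ym K i m hpf = - Ym K (n - 1 - i - m) m (by omega) :=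
            Ym_mirror i m hpf (by omega)
          rw [hmir]
          apply Submodule.neg_mem
          apply Submodule.subset_span
          refine ⟨⟨(false, ⟨n - 1 - i - m, by omega⟩, ⟨m, by omega⟩), by
            simp only [cond_false, Fin.val_mk]; omega⟩, ?_, ?_⟩
          · show degOf n t η _ = g
            show t * dd n η (n - 1 - i - m) m = g
            rw [dd_mirror η i m (by omega)]
            exact hdeg
          · exact vfam_false rfl
  · rintro _ ⟨y, hy, rfl⟩
    apply Submodule.subset_span
    simp only [Set.mem_setOf_eq] at hy
    have hby := y.bound
    by_cases hεy : y.1.1 = true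
    · left
      refine ⟨y.idx, y.lvl, by omega, ?_, ?_⟩
      · rw [mtDeg_eq_dd]
        rw [degOf, hεy] at hy
        exact hy
      · rw [vfam_true hεy]
    · right
      have hεy' : y.1.1 = false := by simpa using hεy
      refine ⟨y.idx, y.lvl, by omega, ?_, ?_⟩
      · rw [mtDeg_eq_dd]
        rw [degOf, hεy'] at hy
        exact hy
      · rw [vfam_false hεy']

/-! #### Counting -/

open scoped Classical in
noncomputable def cardGe (n : ℕ) (t : G) (η : Fin (n/2) → G) (g : G) (m : ℕ) : ℕ :=
  (Finset.univ.filter (fun x : MTIdx n => degOf n t η x = g ∧ m ≤ x.lvl)).card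

open scoped Classical in
noncomputable def cardLvl (n : ℕ) (t : G) (η : Fin (n/2) → G) (g : G) (m : ℕ) : ℕ :=
  (Finset.univ.filter (fun x : MTIdx n => degOf n t η x = g ∧ x.lvl = m)).card

theorem cardGe_split (t : G) (η : Fin (n/2) → G) (g : G) (m : ℕ) :
    cardGe n t η g m = cardLvl n t η g m + cardGe n t η g (m+1) := by
  classical
  unfold cardGe cardLvl
  rw [Finset.card_filter, Finset.card_filter, Finset.card_filter, ← Finset.sum_add_distrib]
  apply Finset.sum_congr rfl
  intro x _
  by_cases hd : degOf n t η x = g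
  · simp only [hd, true_and]
    by_cases hl : x.lvl = m
    · rw [if_pos (by omega), if_pos hl, if_neg (by omega)]
    · by_cases hl2 : m ≤ x.lvl
      · rw [if_pos hl2, if_neg hl, if_pos (by omega)]
      · rw [if_neg hl2, if_neg hl, if_neg (by omega)]
  · simp [hd]

open scoped Classical in
theorem cardLvl_eq (t : G) (η : Fin (n/2) → G) (g : G) (m : ℕ) (hm : 1 ≤ m) :
    cardLvl n t η g m
      = ((Finset.range ((n - m + 1)/2)).filter (fun i => dd n η i m = g)).card
        + ((Finset.range ((n - m)/2)).filter (fun i => t * dd n η i m = g)).card := by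
  classical
  unfold cardLvl
  have hsplit : (Finset.univ.filter (fun x : MTIdx n => degOf n t η x = g ∧ x.lvl = m))
      = (Finset.univ.filter
          (fun x : MTIdx n => x.1.1 = true ∧ degOf n t η x = g ∧ x.lvl = m))
        ∪ (Finset.univ.filter
          (fun x : MTIdx n => x.1.1 = false ∧ degOf n t η x = g ∧ x.lvl = m)) := by
    ext x
    simp only [Finset.mem_filter, Finset.mem_union, Finset.mem_univ, true_and]
    rcases Bool.eq_false_or_eq_true x.1.1 with hb | hb <;> simp [hb]
  rw [hsplit, Finset.card_union_of_disjoint (by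
    rw [Finset.disjoint_left]
    rintro x hx1 hx2
    simp only [Finset.mem_filter] at hx1 hx2
    rw [hx1.2.1] at hx2
    exact absurd hx2.2.1 (by simp))]
  congr 1
  · refine Finset.card_bij' (fun (x : MTIdx n) _ => x.idx)
      (fun b hb => (⟨(true, ⟨b, by
          have := Finset.mem_range.mp (Finset.mem_filter.mp hb).1; omega⟩,
        ⟨m, by have := Finset.mem_range.mp (Finset.mem_filter.mp hb).1; omega⟩), by
          simp only [cond_true, Fin.val_mk]
          have := Finset.mem_range.mp (Finset.mem_filter.mp hb).1; omega⟩ : MTIdx n))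
      ?_ ?_ ?_ ?_
    · intro x hx
      simp only [Finset.mem_filter, Finset.mem_univ, true_and] at hx
      obtain ⟨hε, hd, hl⟩ := hx
      simp only [Finset.mem_filter, Finset.mem_range]
      constructor
      · have := x.bound; omega
      · rw [degOf, hε] at hd
        rw [← hl]
        exact hd
    · intro b hb
      simp only [Finset.mem_filter, Finset.mem_range] at hb
      refine Finset.mem_filter.mpr ⟨Finset.mem_univ _, rfl, ?_, ?_⟩
      · show dd n η b m = g
        exact hb.2
      · rfl
    · intro x hx
      simp only [Finset.mem_filter, Finset.mem_univ, true_and] at hx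
      obtain ⟨hε, hd, hl⟩ := hx
      apply Subtype.ext
      apply Prod.ext
      · exact hε.symm
      · apply Prod.ext
        · exact Fin.ext rfl
        · exact Fin.ext hl.symm
    · intro b hb
      rfl
  · refine Finset.card_bij' (fun (x : MTIdx n) _ => x.idx)
      (fun b hb => (⟨(false, ⟨b, by
          have := Finset.mem_range.mp (Finset.mem_filter.mp hb).1; omega⟩,
        ⟨m, by have := Finset.mem_range.mp (Finset.mem_filter.mp hb).1; omega⟩), by
          simp only [cond_false, Fin.val_mk]
          have := Finset.mem_range.mp (Finset.mem_filter.mp hb).1; omega⟩ : MTIdx n))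
      ?_ ?_ ?_ ?_
    · intro x hx
      simp only [Finset.mem_filter, Finset.mem_univ, true_and] at hx
      obtain ⟨hε, hd, hl⟩ := hx
      simp only [Finset.mem_filter, Finset.mem_range]
      constructor
      · have := x.bound' hε; omega
      · rw [degOf, hε] at hd
        rw [← hl]
        exact hd
    · intro b hb
      simp only [Finset.mem_filter, Finset.mem_range] at hb
      refine Finset.mem_filter.mpr ⟨Finset.mem_univ _, rfl, ?_, ?_⟩
      · show t * dd n η b m = g
        exact hb.2
      · rfl
    · intro x hx
      simp only [Finset.mem_filter, Finset.mem_univ, true_and] at hx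
      obtain ⟨hε, hd, hl⟩ := hx
      apply Subtype.ext
      apply Prod.ext
      · exact hε.symm
      · apply Prod.ext
        · exact Fin.ext rfl
        · exact Fin.ext hl.symm
    · intro b hb
      rfl

/-! #### mod-t relation and the reconstruction argument -/

def trel (t : G) (a b : G) : Prop := a = b ∨ a = t * b

theorem trel_refl (t a : G) : trel t a a := Or.inl rfl

theorem trel_symm {t : G} (htt : t * t = 1) {a b : G} (h : trel t a b) : trel t b a := by
  rcases h with rfl | rfl
  · exact Or.inl rfl
  · right; rw [← mul_assoc, htt, one_mul]

theorem trel_mul {t : G} (htt : t * t = 1) {a b c d : G} (h1 : trel t a b) (h2 : trel t c d) :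
    trel t (a * c) (b * d) := by
  rcases h1 with rfl | rfl <;> rcases h2 with rfl | rfl
  · exact Or.inl rfl
  · exact Or.inr (mul_left_comm _ _ _)
  · exact Or.inr (mul_assoc _ _ _)
  · left
    rw [mul_mul_mul_comm, htt, one_mul]

theorem trel_inv {t : G} (htt : t * t = 1) {a b : G} (h : trel t a b) :
    trel t a⁻¹ b⁻¹ := by
  rcases h with rfl | rfl
  · exact Or.inl rfl
  · right
    rw [_root_.mul_inv_rev, mul_comm]
    congr 1
    exact inv_eq_of_mul_eq_one_right htt

open scoped Classical in
theorem level_count {t : G} (htt : t * t = 1) (ht1 : t ≠ 1)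
    {r1 r2 : ℕ} (hr1 : 1 ≤ r1) (hr2 : 1 ≤ r2) (f f' : ℕ → G)
    (hcount : ∀ g : G,
      ((Finset.range r1).filter (fun i => f i = g)).card
        + ((Finset.range r2).filter (fun i => t * f i = g)).card
      = ((Finset.range r1).filter (fun i => f' i = g)).card
        + ((Finset.range r2).filter (fun i => t * f' i = g)).card)
    (hagree : ∀ i, 1 ≤ i → (i < r1 ∨ i < r2) → trel t (f i) (f' i)) :
    trel t (f' 0) (f 0) := by
  classical
  set a := f 0 with ha
  set χ : G → ℕ := fun x => (if x = a then 1 else 0) + (if x = t * a then 1 else 0) with hχ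
  have hχt : ∀ x, χ (t * x) = χ x := by
    intro x
    simp only [hχ]
    have e1 : (t * x = a) ↔ (x = t * a) := by
      constructor
      · intro h; rw [← h, ← mul_assoc, htt, one_mul]
      · intro h; rw [h, ← mul_assoc, htt, one_mul]
    have e2 : (t * x = t * a) ↔ (x = a) := mul_right_inj t
    rw [if_congr e1 rfl rfl, if_congr e2 rfl rfl]
    exact add_comm _ _
  have hχrel : ∀ x y, trel t x y → χ x = χ y := by
    intro x y h
    rcases h with rfl | rfl
    · rfl
    · exact hχt y
  have hχa : χ a = 1 := by
    have hne : ¬ (a = t * a) := by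
      intro hc
      apply ht1
      have h1 : (1:G) * a = t * a := by rw [one_mul, ← hc]
      exact (mul_right_cancel h1).symm
    simp only [hχ]
    simp [hne]
  have hsum : ∀ (h : ℕ → G),
      (∑ i ∈ Finset.range r1, χ (h i)) + (∑ i ∈ Finset.range r2, χ (h i))
      = (((Finset.range r1).filter (fun i => h i = a)).card
          + ((Finset.range r2).filter (fun i => t * h i = a)).card)
        + (((Finset.range r1).filter (fun i => h i = t*a)).card
          + ((Finset.range r2).filter (fun i => t * h i = t*a)).card) := by
    intro h
    rw [Finset.card_filter, Finset.card_filter, Finset.card_filter, Finset.card_filter]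
    have h1 : ∑ i ∈ Finset.range r1, χ (h i)
        = ∑ i ∈ Finset.range r1,
            ((if h i = a then 1 else 0) + (if h i = t*a then 1 else 0)) := rfl
    have h2 : ∑ i ∈ Finset.range r2, χ (h i)
        = ∑ i ∈ Finset.range r2,
            ((if t * h i = a then 1 else 0) + (if t * h i = t*a then 1 else 0)) := by
      apply Finset.sum_congr rfl
      intro i _
      rw [← hχt (h i)]
    rw [h1, h2, Finset.sum_add_distrib, Finset.sum_add_distrib]
    omega
  have comb : (∑ i ∈ Finset.range r1, χ (f i)) + (∑ i ∈ Finset.range r2, χ (f i))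
      = (∑ i ∈ Finset.range r1, χ (f' i)) + (∑ i ∈ Finset.range r2, χ (f' i)) := by
    rw [hsum f, hsum f', hcount a, hcount (t*a)]
  obtain ⟨s1, rfl⟩ : ∃ s, r1 = s + 1 := ⟨r1 - 1, by omega⟩
  obtain ⟨s2, rfl⟩ : ∃ s, r2 = s + 1 := ⟨r2 - 1, by omega⟩
  rw [Finset.sum_range_succ' (fun i => χ (f i)), Finset.sum_range_succ' (fun i => χ (f i)),
    Finset.sum_range_succ' (fun i => χ (f' i)), Finset.sum_range_succ' (fun i => χ (f' i))]
    at comb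
  have hag1 : ∑ i ∈ Finset.range s1, χ (f (i+1)) = ∑ i ∈ Finset.range s1, χ (f' (i+1)) := by
    apply Finset.sum_congr rfl
    intro i hi
    exact hχrel _ _ (hagree (i+1) (by omega)
      (Or.inl (by have := Finset.mem_range.mp hi; omega)))
  have hag2 : ∑ i ∈ Finset.range s2, χ (f (i+1)) = ∑ i ∈ Finset.range s2, χ (f' (i+1)) := by
    apply Finset.sum_congr rfl
    intro i hi
    exact hχrel _ _ (hagree (i+1) (by omega)
      (Or.inr (by have := Finset.mem_range.mp hi; omega)))
  rw [hag1, hag2, ← ha, hχa] at comb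
  have hone : χ (f' 0) = 1 := by omega
  by_cases h1 : f' 0 = a
  · exact Or.inl h1
  · by_cases h2 : f' 0 = t * a
    · exact Or.inr h2
    · exfalso
      simp only [hχ, if_neg h1, if_neg h2] at hone
      omega

theorem pp_trel (hn : 2 ≤ n) {t : G} (htt : t * t = 1) (ht1 : t ≠ 1)
    (η η' : Fin (n/2) → G)
    (hP : pp n η (n-1) = pp n η' (n-1))
    (hlv : ∀ g m, 1 ≤ m → cardLvl n t η g m = cardLvl n t η' g m) :
    ∀ k, k ≤ n - 1 → trel t (pp n η (n-1-k)) (pp n η' (n-1-k)) := by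
  classical
  intro k
  induction k using Nat.strong_induction_on with
  | _ k ih =>
    intro hk
    rcases Nat.eq_zero_or_pos k with rfl | hk1
    · simp only [Nat.sub_zero]
      exact Or.inl hP
    rcases Nat.eq_or_lt_of_le hk with heq | hklt
    · rw [heq, Nat.sub_self]
      exact Or.inl rfl
    · set m := n - 1 - k with hm
      have hm1 : 1 ≤ m := by omega
      have hr1 : (n - m + 1)/2 = k/2 + 1 := by omega
      have hr2 : (n - m)/2 = (k-1)/2 + 1 := by omega
      have hcount : ∀ g : G,
          ((Finset.range (k/2+1)).filter (fun i => dd n η i m = g)).card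
            + ((Finset.range ((k-1)/2+1)).filter (fun i => t * dd n η i m = g)).card
          = ((Finset.range (k/2+1)).filter (fun i => dd n η' i m = g)).card
            + ((Finset.range ((k-1)/2+1)).filter (fun i => t * dd n η' i m = g)).card := by
        intro g
        have h := hlv g m hm1
        rw [cardLvl_eq t η g m hm1, cardLvl_eq t η' g m hm1, hr1, hr2] at h
        exact h
      have hdd : ∀ i, 1 ≤ i → (i < k/2+1 ∨ i < (k-1)/2+1) →
          trel t (dd n η i m) (dd n η' i m) := by
        intro i hi1 hi2
        have hik : i ≤ k/2 := by omega
        have hikk : i < k := by omega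
        have e1 : dd n η i m = (pp n η i)⁻¹ * pp n η (i + m) := by
          rw [pp_mul_dd, inv_mul_cancel_left]
        have e1' : dd n η' i m = (pp n η' i)⁻¹ * pp n η' (i + m) := by
          rw [pp_mul_dd, inv_mul_cancel_left]
        have e2 : pp n η i = pp n η (n-1) * (pp n η (n-1-i))⁻¹ := by
          rw [← pp_reflect η i (by omega) (by omega),
            mul_comm (pp n η (n-1-i)) (pp n η i), mul_inv_cancel_right]
        have e2' : pp n η' i = pp n η' (n-1) * (pp n η' (n-1-i))⁻¹ := by
          rw [← pp_reflect η' i (by omega) (by omega),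
            mul_comm (pp n η' (n-1-i)) (pp n η' i), mul_inv_cancel_right]
        have e3 : i + m = n - 1 - (k - i) := by omega
        rw [e1, e1', e3, e2, e2', hP]
        have hA := ih i hikk (by omega)
        have hB := ih (k - i) (by omega) (by omega)
        exact trel_mul htt
          (trel_inv htt (trel_mul htt (trel_refl _ _) (trel_inv htt hA))) hB
      have hlc := level_count htt ht1 (by omega) (by omega)
        (fun i => dd n η i m) (fun i => dd n η' i m) hcount hdd
      exact trel_symm htt hlc

theorem etaB_eq (η : Fin (n/2) → G) (iN : ℕ) (h : 2*iN + 2 ≤ n) (pf : iN < n/2) :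
    etaB n η iN = η ⟨iN, pf⟩ := by
  rw [etaB, dif_pos (show min iN (n - 2 - iN) < n/2 by omega)]
  exact congrArg η (Fin.ext (by show min iN (n-2-iN) = iN; omega))

end AuxDev
/-- If some `g_i ≢ g_i' (mod ⟨t⟩)` for `i ≤ ⌊(n−1)/2⌋`, or `n` is even and `g_q ≠ g_q'`,
then `(UJ_n, t, η)` and `(UJ_n, t, η')` are not graded-isomorphic. -/
theorem statement_16 {K : Type*} [Field K] [Infinite K] (h2 : (2 : K) ≠ 0)
    {n : ℕ} (hn : 2 ≤ n) {G : Type*} [CommGroup G]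
    (t : G) (ht : orderOf t = 2) (η η' : Fin (n / 2) → G)
    (hcond :
      (∃ i : Fin ((n - 1) / 2),
        η ⟨i.1, by have := i.isLt; omega⟩ ≠ η' ⟨i.1, by have := i.isLt; omega⟩ ∧
        η ⟨i.1, by have := i.isLt; omega⟩ ≠ η' ⟨i.1, by have := i.isLt; omega⟩ * t) ∨
      (Even n ∧ η ⟨n / 2 - 1, by omega⟩ ≠ η' ⟨n / 2 - 1, by omega⟩)) :
    ¬ GradedIso (mtComp K t η) (mtComp K t η') := by
  classical
  rintro ⟨ψ, hψm, hψc⟩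
  have hn1 : 1 ≤ n := by omega
  have htt : t * t = 1 := by
    have h := pow_orderOf_eq_one t
    rw [ht, pow_two] at h
    exact h
  have ht1 : t ≠ 1 := by
    intro hc
    rw [hc, orderOf_one] at ht
    omega
  -- Step 1: counts of homogeneous basis elements agree
  have hGe : ∀ (g : G) (m : ℕ), 1 ≤ m → cardGe n t η g m = cardGe n t η' g m := by
    intro g m hm
    have hmap : (mtComp K t η g ⊓ Qf K n m).map (ψ : UJ K n →ₗ[K] UJ K n)
        = mtComp K t η' g ⊓ Qf K n m := by
      rw [Submodule.map_inf (ψ : UJ K n →ₗ[K] UJ K n) ψ.injective, hψc g,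
        map_Qf h2 hn1 ψ hψm m hm]
    have hfr := LinearEquiv.finrank_map_eq ψ (mtComp K t η g ⊓ Qf K n m)
    rw [hmap] at hfr
    have hsp : ∀ ζ : Fin (n/2) → G, mtComp K t ζ g ⊓ Qf K n m
        = Submodule.span K (vfam K ''
          ((Finset.univ.filter
            (fun x : MTIdx n => degOf n t ζ x = g ∧ m ≤ x.lvl)) : Set (MTIdx n))) := by
      intro ζ
      rw [mtComp_eq_span h2 t ζ g, Qf_eq_span h2 m, span_inf h2]
      congr 1
      congr 1
      ext x
      simp [Set.mem_setOf_eq]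
    rw [hsp η, hsp η'] at hfr
    rw [finrank_span_finset h2, finrank_span_finset h2] at hfr
    unfold cardGe
    exact hfr.symm
  have hLv : ∀ g m, 1 ≤ m → cardLvl n t η g m = cardLvl n t η' g m := by
    intro g m hm
    have e1 := cardGe_split t η g m
    have e2 := cardGe_split t η' g m
    have f1 := hGe g m hm
    have f2 := hGe g (m+1) (by omega)
    omega
  -- Step 2: the top degree agrees exactly
  have hP : pp n η (n-1) = pp n η' (n-1) := by
    have h := hLv (pp n η (n-1)) (n-1) (by omega)
    rw [cardLvl_eq t η _ _ (by omega), cardLvl_eq t η' _ _ (by omega)] at h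
    have er1 : (n - (n-1) + 1)/2 = 1 := by omega
    have er2 : (n - (n-1))/2 = 0 := by omega
    rw [er1, er2] at h
    simp only [Finset.range_zero, Finset.filter_empty, Finset.card_empty, add_zero,
      Finset.range_one] at h
    rw [Finset.filter_singleton, Finset.filter_singleton] at h
    rw [if_pos (show dd n η 0 (n-1) = pp n η (n-1) from rfl)] at h
    by_cases hc : dd n η' 0 (n-1) = pp n η (n-1)
    · exact hc.symm
    · rw [if_neg hc] at h
      simp at h
  -- Step 3: prefix products agree mod t
  have hpp : ∀ j, j ≤ n - 1 → trel t (pp n η j) (pp n η' j) := by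
    intro j hj
    have h := pp_trel hn htt ht1 η η' hP hLv (n - 1 - j) (by omega)
    have hjj : n - 1 - (n - 1 - j) = j := by omega
    rw [hjj] at h
    exact h
  -- Step 4: individual etas agree mod t below the middle
  have hηrel : ∀ (iN : ℕ) (h3 : 2*iN + 3 ≤ n) (pf : iN < n/2),
      trel t (η ⟨iN, pf⟩) (η' ⟨iN, pf⟩) := by
    intro iN h3 pf
    have hd : ∀ ζ : Fin (n/2) → G, ζ ⟨iN, pf⟩ = (pp n ζ iN)⁻¹ * pp n ζ (iN + 1) := by
      intro ζ
      have hdd1 : dd n ζ iN 1 = ζ ⟨iN, pf⟩ := by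
        rw [dd, Finset.prod_range_one, Nat.add_zero]
        exact etaB_eq ζ iN (by omega) pf
      rw [pp_mul_dd, inv_mul_cancel_left, hdd1]
    rw [hd η, hd η']
    exact trel_mul htt (trel_inv htt (hpp iN (by omega))) (hpp (iN+1) (by omega))
  rcases hcond with ⟨i, hne1, hne2⟩ | ⟨hEv, hneq⟩
  · have h3 : 2 * i.1 + 3 ≤ n := by have := i.isLt; omega
    have pf : i.1 < n/2 := by omega
    rcases hηrel i.1 h3 pf with heq | heq
    · exact hne1 heq
    · apply hne2
      rw [heq, mul_comm]
  · -- even case: the middle eta agrees exactly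
    obtain ⟨s, hs⟩ : ∃ s, n / 2 = s + 1 := ⟨n/2 - 1, by omega⟩
    have hns : n = 2*s + 2 := by
      rcases hEv with ⟨r, hr⟩
      omega
    have hsplitP : ∀ ζ : Fin (n/2) → G,
        pp n ζ (n-1) = etaB n ζ s * (∏ j ∈ Finset.range s, etaB n ζ j)^2 := by
      intro ζ
      have hq2 : n - 1 = (s + 1) + s := by omega
      rw [pp, dd]
      simp only [zero_add]
      rw [hq2, Finset.prod_range_add]
      have htail : ∀ j ∈ Finset.range s, etaB n ζ ((s+1) + j) = etaB n ζ (s - 1 - j) := by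
        intro j hj
        have hj' := Finset.mem_range.mp hj
        have harg : (s+1) + j = n - 2 - (s - 1 - j) := by omega
        rw [harg, etaB_symm]
      rw [Finset.prod_congr rfl htail,
        Finset.prod_range_reflect (fun j => etaB n ζ j) s,
        Finset.prod_range_succ]
      rw [pow_two]
      rw [mul_comm (∏ x ∈ Finset.range s, etaB n ζ x) (etaB n ζ s), mul_assoc]
    have hXY : (∏ j ∈ Finset.range s, etaB n η j) ^ 2
        = (∏ j ∈ Finset.range s, etaB n η' j)^2 := by
      rw [← Finset.prod_pow, ← Finset.prod_pow]
      apply Finset.prod_congr rfl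
      intro j hj
      have hj' := Finset.mem_range.mp hj
      have pfj : j < n/2 := by omega
      have hrel := hηrel j (by omega) pfj
      rw [etaB_eq η j (by omega) pfj, etaB_eq η' j (by omega) pfj]
      rcases hrel with heq | heq
      · rw [heq]
      · rw [heq, mul_pow, show t^2 = 1 by rw [pow_two, htt], one_mul]
    have hfin : etaB n η s = etaB n η' s := by
      have h1 := hsplitP η
      have h2 := hsplitP η'
      rw [hP, h2, hXY] at h1
      exact (mul_right_cancel h1).symm
    apply hneq
    have pfs : s < n/2 := by omega
    have e1 : η ⟨n/2 - 1, by omega⟩ = η ⟨s, pfs⟩ := congrArg η (Fin.ext (show n/2 - 1 = s by omega))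
    have e2 : η' ⟨n/2 - 1, by omega⟩ = η' ⟨s, pfs⟩ := congrArg η' (Fin.ext (show n/2 - 1 = s by omega))
    rw [e1, e2, ← etaB_eq η s (by omega) pfs, ← etaB_eq η' s (by omega) pfs]
    exact hfin
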